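/- Let (x,λ) be a solution of (PD-AVD) and let (x*,λ*) be a primal-dual optimal solution. Then the following three integral bounds hold: β·∫_{t₀}^∞ t‖Ax(t) − b‖² dt ≤ 2·E_{x*,λ*}(t₀)/θ; (1 − 2θ)·∫_{t₀}^∞ t·(L(x(t),λ*) − L(x*,λ(t))) dt ≤ E_{x*,λ*}(t₀)/θ; and ξ·∫_{t₀}^∞ t‖(ẋ(t), λ̇(t))‖² dt ≤ E_{x*,λ*}(t₀)/θ; in particular each of these three integrals, multiplied by its respective nonnegative coefficient, is finite. -/

import Mathlib

open Set MeasureTheory Filter Topology Asymptotics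
open scoped RealInnerProductSpace ENNReal

/-- The augmented Lagrangian `L_β(x,λ) = f(x) + ⟪λ, Ax − b⟫ + (β/2)‖Ax − b‖²`. -/
noncomputable def augLagrangian {X Y : Type*}
    [NormedAddCommGroup X] [InnerProductSpace ℝ X]
    [NormedAddCommGroup Y] [InnerProductSpace ℝ Y]
    (f : X → ℝ) (A : X →L[ℝ] Y) (b : Y) (β : ℝ) (u : X) (μ : Y) : ℝ :=
  f u + ⟪μ, A u - b⟫ + β / 2 * ‖A u - b‖ ^ 2

/-- The energy function `E_{z,μ}(t)` associated to a trajectory `(x,λ)` with velocities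
`(x',λ')`, where the product norm on `X × Y` is the Hilbert norm
`‖(u,v)‖² = ‖u‖² + ‖v‖²` and `ξ = θα − θ − 1`. -/
noncomputable def pdEnergy {X Y : Type*}
    [NormedAddCommGroup X] [InnerProductSpace ℝ X]
    [NormedAddCommGroup Y] [InnerProductSpace ℝ Y]
    (f : X → ℝ) (A : X →L[ℝ] Y) (b : Y) (α β θ : ℝ)
    (x : ℝ → X) (x' : ℝ → X) (l : ℝ → Y) (l' : ℝ → Y)
    (z : X) (μ : Y) (t : ℝ) : ℝ :=
  θ ^ 2 * t ^ 2 *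
      (augLagrangian f A b β (x t) μ - augLagrangian f A b β z (l t))
    + 1 / 2 * (‖x t - z + (θ * t) • x' t‖ ^ 2 + ‖l t - μ + (θ * t) • l' t‖ ^ 2)
    + (θ * α - θ - 1) / 2 * (‖x t - z‖ ^ 2 + ‖l t - μ‖ ^ 2)

section helpers

lemma convex_grad_ineq {X : Type*} [NormedAddCommGroup X] [InnerProductSpace ℝ X]
    [CompleteSpace X]
    (f : X → ℝ) (f' : X → X) (hconv : ConvexOn ℝ univ f)
    (hgrad : ∀ u, HasGradientAt f (f' u) u) (u y : X) :
    f u + ⟪f' u, y - u⟫ ≤ f y := by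
  set g : ℝ → ℝ := fun s => f (u + s • (y - u)) with hg
  have hder : HasDerivAt g ⟪f' u, y - u⟫ 0 := by
    have h1 : HasDerivAt (fun s : ℝ => u + s • (y - u)) (y - u) 0 := by
      simpa using ((hasDerivAt_id (0:ℝ)).smul_const (y - u)).const_add u
    have hg' : HasFDerivAt f ((InnerProductSpace.toDual ℝ X) (f' u)) (u + (0:ℝ) • (y - u)) := by
      simpa using (hgrad u).hasFDerivAt
    have h2 := hg'.comp_hasDerivAt 0 h1
    have h3 : HasDerivAt (f ∘ fun s : ℝ => u + s • (y - u)) ⟪f' u, y - u⟫ 0 := by simpa using h2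
    exact h3
  have hslope : ∀ s ∈ Ioo (0:ℝ) 1, (g s - g 0) / (s - 0) ≤ f y - f u := by
    intro s hs
    have := hconv.2 (mem_univ u) (mem_univ y) (by linarith [hs.2] : (0:ℝ) ≤ 1 - s)
      (le_of_lt hs.1) (by ring)
    have hgs : g s ≤ (1 - s) * f u + s * f y := by
      have heq : (1 - s) • u + s • y = u + s • (y - u) := by
        simp [smul_sub, sub_smul]; abel
      simpa [heq, smul_eq_mul] using this
    have h0 : g 0 = f u := by simp [hg]
    rw [sub_zero, div_le_iff₀ hs.1, h0]
    nlinarith [hs.1]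
  have htend : Tendsto (slope g 0) (𝓝[>] (0:ℝ)) (𝓝 ⟪f' u, y - u⟫) := by
    have := (hder.hasDerivWithinAt (s := Ioi 0))
    rw [hasDerivWithinAt_iff_tendsto_slope] at this
    simpa [Set.diff_singleton_eq_self (notMem_Ioi.2 le_rfl)] using this
  have : ⟪f' u, y - u⟫ ≤ f y - f u := by
    refine le_of_tendsto htend ?_
    filter_upwards [Ioo_mem_nhdsGT_of_mem (by norm_num : (0:ℝ) ∈ Ico (0:ℝ) 1)] with s hs
    have := hslope s hs
    rw [sub_zero, div_eq_inv_mul] at this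
    simpa [slope_def_field, slope] using this
  linarith

lemma lintegral_Ioi_le_of_intervalIntegral_le (g : ℝ → ℝ) (t₀ K : ℝ)
    (hg : Continuous g) (hg0 : ∀ t, t₀ ≤ t → 0 ≤ g t)
    (hK : ∀ T, t₀ ≤ T → ∫ t in t₀..T, g t ≤ K) :
    ∫⁻ t in Ioi t₀, ENNReal.ofReal (g t) ≤ ENNReal.ofReal K := by
  have hcov : AECover (volume.restrict (Ioi t₀)) atTop (fun n : ℕ => Iic (t₀ + n)) :=
    aecover_Iic (tendsto_atTop_add_const_left _ _ tendsto_natCast_atTop_atTop)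
  have hmeas : AEMeasurable (fun t => ENNReal.ofReal (g t)) (volume.restrict (Ioi t₀)) :=
    (ENNReal.measurable_ofReal.comp hg.measurable).aemeasurable
  have htend := hcov.lintegral_tendsto_of_countably_generated hmeas
  refine le_of_tendsto htend (Eventually.of_forall fun n => ?_)
  have hres : ∫⁻ t in Iic (t₀ + n), ENNReal.ofReal (g t) ∂(volume.restrict (Ioi t₀))
      = ∫⁻ t in Ioc t₀ (t₀ + n), ENNReal.ofReal (g t) := by
    rw [Measure.restrict_restrict measurableSet_Iic]
    rw [Set.Iic_inter_Ioi]
  rw [hres]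
  have hint : IntegrableOn g (Ioc t₀ (t₀ + n)) := hg.integrableOn_Ioc
  have hnn : (0 : ℝ → ℝ) ≤ᵐ[volume.restrict (Ioc t₀ (t₀ + n))] g := by
    filter_upwards [ae_restrict_mem measurableSet_Ioc] with t ht
    exact hg0 t ht.1.le
  rw [← MeasureTheory.ofReal_integral_eq_lintegral_ofReal hint hnn]
  apply ENNReal.ofReal_le_ofReal
  have hle : t₀ ≤ t₀ + n := le_add_of_nonneg_right (Nat.cast_nonneg n)
  rw [← intervalIntegral.integral_of_le hle]
  exact hK _ hle

end helpers

set_option maxHeartbeats 1000000 in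
theorem stmt1
    {X Y : Type*}
    [NormedAddCommGroup X] [InnerProductSpace ℝ X] [CompleteSpace X]
    [NormedAddCommGroup Y] [InnerProductSpace ℝ Y] [CompleteSpace Y]
    (f : X → ℝ) (f' : X → X) (A : X →L[ℝ] Y) (b : Y)
    (hconv : ConvexOn ℝ univ f)
    (hgrad : ∀ u, HasGradientAt f (f' u) u)
    (hf'cont : Continuous f')
    (t₀ α β θ : ℝ) (ht₀ : 0 < t₀) (hα : 3 ≤ α) (hβ : 0 ≤ β)
    (hθ1 : 1 / (α - 1) ≤ θ) (hθ2 : θ ≤ 1 / 2)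
    (x : ℝ → X) (x' x'' : ℝ → X) (l : ℝ → Y) (l' l'' : ℝ → Y)
    (hx1 : ∀ t ∈ Ici t₀, HasDerivAt x (x' t) t)
    (hx2 : ∀ t ∈ Ici t₀, HasDerivAt x' (x'' t) t)
    (hx3 : ContinuousOn x'' (Ici t₀))
    (hl1 : ∀ t ∈ Ici t₀, HasDerivAt l (l' t) t)
    (hl2 : ∀ t ∈ Ici t₀, HasDerivAt l' (l'' t) t)
    (hl3 : ContinuousOn l'' (Ici t₀))
    (hode1 : ∀ t ∈ Ici t₀, x'' t + (α / t) • x' t + f' (x t)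
        + (ContinuousLinearMap.adjoint A) (l t + (θ * t) • l' t)
        + β • (ContinuousLinearMap.adjoint A) (A (x t) - b) = 0)
    (hode2 : ∀ t ∈ Ici t₀, l'' t + (α / t) • l' t
        - (A (x t + (θ * t) • x' t) - b) = 0)
    (xs : X) (ls : Y)
    (hopt1 : f' xs + (ContinuousLinearMap.adjoint A) ls = 0)
    (hopt2 : A xs = b)
    :
    ENNReal.ofReal β *
        (∫⁻ t in Ioi t₀, ENNReal.ofReal (t * ‖A (x t) - b‖ ^ 2))
      ≤ ENNReal.ofReal (2 * pdEnergy f A b α β θ x x' l l' xs ls t₀ / θ) ∧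
    ENNReal.ofReal (1 - 2 * θ) *
        (∫⁻ t in Ioi t₀, ENNReal.ofReal
          (t * ((f (x t) + ⟪ls, A (x t) - b⟫) - (f xs + ⟪l t, A xs - b⟫))))
      ≤ ENNReal.ofReal (pdEnergy f A b α β θ x x' l l' xs ls t₀ / θ) ∧
    ENNReal.ofReal (θ * α - θ - 1) *
        (∫⁻ t in Ioi t₀, ENNReal.ofReal (t * (‖x' t‖ ^ 2 + ‖l' t‖ ^ 2)))
      ≤ ENNReal.ofReal (pdEnergy f A b α β θ x x' l l' xs ls t₀ / θ) := by
  classical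
  have hα1 : (0:ℝ) < α - 1 := by linarith
  have hθpos : 0 < θ := lt_of_lt_of_le (by positivity) hθ1
  have hξ0 : 0 ≤ θ * α - θ - 1 := by nlinarith [(div_le_iff₀ hα1).mp hθ1]
  have hAxsb : A xs - b = 0 := by rw [hopt2, sub_self]
  set ξ : ℝ := θ * α - θ - 1 with hξ
  set E : ℝ → ℝ := pdEnergy f A b α β θ x x' l l' xs ls with hE
  have hEeq : E = (fun t => θ^2*t^2*(augLagrangian f A b β (x t) ls - f xs)
      + 1/2*(⟪x t - xs + (θ*t)•x' t, x t - xs + (θ*t)•x' t⟫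
           + ⟪l t - ls + (θ*t)•l' t, l t - ls + (θ*t)•l' t⟫)
      + ξ/2*(⟪x t - xs, x t - xs⟫ + ⟪l t - ls, l t - ls⟫)) := by
    funext s
    simp [hE, pdEnergy, augLagrangian, hAxsb, real_inner_self_eq_norm_sq, hξ]
  set Φ : ℝ → ℝ := fun t =>
    (θ^2*(2*t^1))*(augLagrangian f A b β (x t) ls - f xs)
      + θ^2*t^2*(⟪f' (x t), x' t⟫ + ⟪ls, A (x' t)⟫
        + β/2*(⟪A (x t) - b, A (x' t)⟫ + ⟪A (x' t), A (x t) - b⟫))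
    + 1/2*((⟪x t - xs + (θ*t)•x' t, x' t + (θ•x' t + (θ*t)•x'' t)⟫
          + ⟪x' t + (θ•x' t + (θ*t)•x'' t), x t - xs + (θ*t)•x' t⟫)
         + (⟪l t - ls + (θ*t)•l' t, l' t + (θ•l' t + (θ*t)•l'' t)⟫
          + ⟪l' t + (θ•l' t + (θ*t)•l'' t), l t - ls + (θ*t)•l' t⟫))
    + ξ/2*((⟪x t - xs, x' t⟫ + ⟪x' t, x t - xs⟫) + (⟪l t - ls, l' t⟫ + ⟪l' t, l t - ls⟫)) with hΦ
  have hderivE : ∀ t ∈ Ici t₀, HasDerivAt E (Φ t) t := by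
    intro t ht
    have hdx := hx1 t ht; have hdx' := hx2 t ht
    have hdl := hl1 t ht; have hdl' := hl2 t ht
    have hAx : HasDerivAt (fun s => A (x s) - b) (A (x' t)) t :=
      (A.hasFDerivAt.comp_hasDerivAt t hdx).sub_const b
    have hfx : HasDerivAt (fun s => f (x s)) ⟪f' (x t), x' t⟫ t := by
      exact (by simpa using ((hgrad (x t)).hasFDerivAt.comp_hasDerivAt t hdx) :
        HasDerivAt (f ∘ x) ⟪f' (x t), x' t⟫ t)
    have hin1 : HasDerivAt (fun s => ⟪ls, A (x s) - b⟫) ⟪ls, A (x' t)⟫ t := by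
      simpa using (hasDerivAt_const t ls).inner ℝ hAx
    have hnorm : HasDerivAt (fun s => ‖A (x s) - b‖^2)
        (⟪A (x t) - b, A (x' t)⟫ + ⟪A (x' t), A (x t) - b⟫) t := by
      have h := hAx.inner ℝ hAx
      have heq : (fun s => (inner ℝ (A (x s) - b) (A (x s) - b) : ℝ)) = fun s => ‖A (x s) - b‖^2 :=
        funext fun s => real_inner_self_eq_norm_sq _
      rwa [heq] at h
    have hLb : HasDerivAt (fun s => augLagrangian f A b β (x s) ls)
        (⟪f' (x t), x' t⟫ + ⟪ls, A (x' t)⟫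
          + β/2*(⟪A (x t) - b, A (x' t)⟫ + ⟪A (x' t), A (x t) - b⟫)) t := by
      simp only [augLagrangian]
      exact (hfx.add hin1).add (hnorm.const_mul (β/2))
    have hsmx : HasDerivAt (fun s => (θ*s) • x' s) (θ • x' t + (θ*t) • x'' t) t := by
      exact (by simpa [add_comm] using (((hasDerivAt_id t).const_mul θ).smul hdx') :
        HasDerivAt ((fun y => θ * y) • x') (θ • x' t + (θ*t) • x'' t) t)
    have hsml : HasDerivAt (fun s => (θ*s) • l' s) (θ • l' t + (θ*t) • l'' t) t := by
      exact (by simpa [add_comm] using (((hasDerivAt_id t).const_mul θ).smul hdl') :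
        HasDerivAt ((fun y => θ * y) • l') (θ • l' t + (θ*t) • l'' t) t)
    have hvx : HasDerivAt (fun s => x s - xs + (θ*s) • x' s)
        (x' t + (θ • x' t + (θ*t) • x'' t)) t := (hdx.sub_const xs).add hsmx
    have hvy : HasDerivAt (fun s => l s - ls + (θ*s) • l' s)
        (l' t + (θ • l' t + (θ*t) • l'' t)) t := (hdl.sub_const ls).add hsml
    have h1 := ((hasDerivAt_pow 2 t).const_mul (θ^2)).mul (hLb.sub_const (f xs))
    have h2 := ((hvx.inner ℝ hvx).add (hvy.inner ℝ hvy)).const_mul (1/2 : ℝ)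
    have h3 := (((hdx.sub_const xs).inner ℝ (hdx.sub_const xs)).add ((hdl.sub_const ls).inner ℝ (hdl.sub_const ls))).const_mul (ξ/2)
    rw [hEeq]
    have h := (h1.add h2).add h3
    exact h.congr_deriv (by norm_num [hΦ])
  have hΦle : ∀ t ∈ Ici t₀, Φ t ≤ -(θ*t)*((1-2*θ)*(f (x t) - f xs + ⟪ls, A (x t) - b⟫)
      + (1-θ)*β*‖A (x t) - b‖^2 + ξ*(‖x' t‖^2 + ‖l' t‖^2)) := by
    intro t ht
    have ht0 : (0:ℝ) < t := lt_of_lt_of_le ht₀ ht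
    have htne : t ≠ 0 := ne_of_gt ht0
    have hx'' : x'' t = -((α/t) • x' t + f' (x t)
        + (ContinuousLinearMap.adjoint A) (l t + (θ*t) • l' t)
        + β • (ContinuousLinearMap.adjoint A) (A (x t) - b)) := by
      apply eq_neg_of_add_eq_zero_left
      rw [← hode1 t ht]; abel
    have hl'' : l'' t = -((α/t) • l' t - (A (x t + (θ*t) • x' t) - b)) := by
      apply eq_neg_of_add_eq_zero_left
      rw [← hode2 t ht]; abel
    have hx''s : (θ*t) • x'' t = -((θ*α) • x' t + (θ*t) • f' (x t)
        + (θ*t) • (ContinuousLinearMap.adjoint A) (l t)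
        + ((θ*t)*(θ*t)) • (ContinuousLinearMap.adjoint A) (l' t)
        + ((θ*t)*β) • (ContinuousLinearMap.adjoint A) (A (x t) - b)) := by
      rw [hx'']
      simp only [map_add, _root_.map_smul]
      match_scalars <;> (field_simp; try ring)
    have hl''s : (θ*t) • l'' t = -((θ*α) • l' t) + ((θ*t) • (A (x t) - b)
        + ((θ*t)*(θ*t)) • A (x' t)) := by
      rw [hl'']
      simp only [map_add, _root_.map_smul]
      match_scalars <;> (field_simp; try ring)
    have hconvx : f (x t) - f xs ≤ ⟪x t - xs, f' (x t)⟫ := by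
      have h := convex_grad_ineq f f' hconv hgrad (x t) xs
      have h2 : ⟪f' (x t), xs - x t⟫ = -⟪x t - xs, f' (x t)⟫ := by
        rw [real_inner_comm, ← inner_neg_left, neg_sub]
      linarith [h, h2.le, h2.ge]
    have hΦeq : Φ t = θ*t*(f (x t) - f xs - ⟪x t - xs, f' (x t)⟫)
        + (-(θ*t))*((1-2*θ)*(f (x t) - f xs + ⟪ls, A (x t) - b⟫)
          + (1-θ)*β*‖A (x t) - b‖^2 + ξ*(‖x' t‖^2 + ‖l' t‖^2)) := by
      rw [hΦ]
      simp only [hξ]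
      rw [hx''s, hl''s]
      simp only [augLagrangian, map_add, map_sub, _root_.map_smul, hopt2,
        inner_add_left, inner_add_right, inner_sub_left, inner_sub_right,
        inner_neg_left, inner_neg_right,
        real_inner_smul_left, real_inner_smul_right,
        ContinuousLinearMap.adjoint_inner_left, ContinuousLinearMap.adjoint_inner_right,
        norm_sub_sq_real, real_inner_self_eq_norm_sq, real_inner_comm]
      ring
    rw [hΦeq]
    nlinarith [mul_pos hθpos ht0, hconvx]
  have hfc : Continuous f := continuous_iff_continuousAt.2
    (fun u => (hgrad u).hasFDerivAt.differentiableAt.continuousAt)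
  have hxc : ContinuousOn x (Ici t₀) := fun s hs => (hx1 s hs).continuousAt.continuousWithinAt
  have hx'c : ContinuousOn x' (Ici t₀) := fun s hs => (hx2 s hs).continuousAt.continuousWithinAt
  have hlc : ContinuousOn l (Ici t₀) := fun s hs => (hl1 s hs).continuousAt.continuousWithinAt
  have hl'c : ContinuousOn l' (Ici t₀) := fun s hs => (hl2 s hs).continuousAt.continuousWithinAt
  have hArc : ContinuousOn (fun s => A (x s) - b) (Ici t₀) :=
    (A.continuous.comp_continuousOn hxc).sub continuousOn_const
  have hAx'c : ContinuousOn (fun s => A (x' s)) (Ici t₀) := A.continuous.comp_continuousOn hx'c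
  have hf'xc : ContinuousOn (fun s => f' (x s)) (Ici t₀) := hf'cont.comp_continuousOn hxc
  have hvxc : ContinuousOn (fun s => x s - xs + (θ*s)•x' s) (Ici t₀) :=
    (hxc.sub continuousOn_const).add ((continuousOn_const.mul continuousOn_id).smul hx'c)
  have hvyc : ContinuousOn (fun s => l s - ls + (θ*s)•l' s) (Ici t₀) :=
    (hlc.sub continuousOn_const).add ((continuousOn_const.mul continuousOn_id).smul hl'c)
  have hwxc : ContinuousOn (fun s => x' s + (θ•x' s + (θ*s)•x'' s)) (Ici t₀) :=
    hx'c.add ((continuousOn_const.smul hx'c).add ((continuousOn_const.mul continuousOn_id).smul hx3))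
  have hwyc : ContinuousOn (fun s => l' s + (θ•l' s + (θ*s)•l'' s)) (Ici t₀) :=
    hl'c.add ((continuousOn_const.smul hl'c).add ((continuousOn_const.mul continuousOn_id).smul hl3))
  have haugc : ContinuousOn (fun s => augLagrangian f A b β (x s) ls) (Ici t₀) := by
    simp only [augLagrangian]
    exact ((hfc.comp_continuousOn hxc).add (continuousOn_const.inner hArc)).add
      (continuousOn_const.mul ((hArc.norm).pow 2))
  have hΦc : ContinuousOn Φ (Ici t₀) := by
    rw [hΦ]
    refine ContinuousOn.add (ContinuousOn.add (ContinuousOn.add ?_ ?_) ?_) ?_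
    · exact (Continuous.continuousOn (continuous_const.mul (continuous_const.mul (continuous_pow 1)))).mul (haugc.sub continuousOn_const)
    · exact (Continuous.continuousOn (continuous_const.mul (continuous_pow 2))).mul
        (((hf'xc.inner hx'c).add (continuousOn_const.inner hAx'c)).add
          (continuousOn_const.mul ((hArc.inner hAx'c).add (hAx'c.inner hArc))))
    · exact continuousOn_const.mul
        (((hvxc.inner hwxc).add (hwxc.inner hvxc)).add
          ((hvyc.inner hwyc).add (hwyc.inner hvyc)))
    · exact continuousOn_const.mul
        ((((hxc.sub continuousOn_const).inner hx'c).add (hx'c.inner (hxc.sub continuousOn_const))).add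
          (((hlc.sub continuousOn_const).inner hl'c).add (hl'c.inner (hlc.sub continuousOn_const))))
  clear_value ξ E Φ
  have hDnn : ∀ u : X, 0 ≤ f u - f xs + ⟪ls, A u - b⟫ := by
    intro u
    have h := convex_grad_ineq f f' hconv hgrad xs u
    have hfs : f' xs = -((ContinuousLinearMap.adjoint A) ls) := eq_neg_of_add_eq_zero_left hopt1
    have h2 : ⟪f' xs, u - xs⟫ = -⟪ls, A u - b⟫ := by
      rw [hfs, inner_neg_left, ContinuousLinearMap.adjoint_inner_left, map_sub, hopt2]
    rw [h2] at h
    linarith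
  have hE0 : ∀ T, T ∈ Ici t₀ → 0 ≤ E T := by
    intro T hT
    have hD := hDnn (x T)
    have h1 : 0 ≤ augLagrangian f A b β (x T) ls - f xs := by
      simp only [augLagrangian]
      have hb2 : 0 ≤ β/2 * ‖A (x T) - b‖^2 :=
        mul_nonneg (by linarith) (sq_nonneg _)
      linarith
    rw [hEeq]
    have t1 : 0 ≤ θ^2*T^2*(augLagrangian f A b β (x T) ls - f xs) :=
      mul_nonneg (mul_nonneg (sq_nonneg θ) (sq_nonneg T)) h1
    have t2 := real_inner_self_nonneg (x := x T - xs + (θ*T)•x' T)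
    have t3 := real_inner_self_nonneg (x := l T - ls + (θ*T)•l' T)
    have t4 := real_inner_self_nonneg (x := x T - xs)
    have t5 := real_inner_self_nonneg (x := l T - ls)
    have t6 : 0 ≤ ξ/2 := by linarith
    nlinarith [mul_nonneg t6 (add_nonneg t4 t5)]
  have hFTC : ∀ T, t₀ ≤ T → E T - E t₀ = ∫ s in t₀..T, Φ s := by
    intro T hT
    have hsub : uIcc t₀ T ⊆ Ici t₀ := by rw [uIcc_of_le hT]; exact Icc_subset_Ici_self
    exact (intervalIntegral.integral_eq_sub_of_hasDerivAt
      (fun s hs => hderivE s (hsub hs)) ((hΦc.mono hsub).intervalIntegrable)).symm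
  have hmain : ∀ (g : ℝ → ℝ), ContinuousOn g (Ici t₀) → (∀ s ∈ Ici t₀, 0 ≤ g s) →
      (∀ s ∈ Ici t₀, θ * g s ≤ -Φ s) → ∀ T, t₀ ≤ T → ∫ s in t₀..T, g s ≤ E t₀ / θ := by
    intro g hgc hg0 hgle T hT
    have hsub : uIcc t₀ T ⊆ Ici t₀ := by rw [uIcc_of_le hT]; exact Icc_subset_Ici_self
    have hig : IntervalIntegrable g volume t₀ T := (hgc.mono hsub).intervalIntegrable
    have hiΦ : IntervalIntegrable (fun s => -Φ s) volume t₀ T :=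
      ((hΦc.mono hsub).neg).intervalIntegrable
    have h1 : θ * ∫ s in t₀..T, g s = ∫ s in t₀..T, θ * g s :=
      (intervalIntegral.integral_const_mul θ g).symm
    have h2 : ∫ s in t₀..T, θ * g s ≤ ∫ s in t₀..T, -Φ s := by
      apply intervalIntegral.integral_mono_on hT (hig.const_mul θ) hiΦ
      intro s hs
      exact hgle s (le_trans hs.1 le_rfl : t₀ ≤ s)
    have h3 : ∫ s in t₀..T, -Φ s = E t₀ - E T := by
      rw [intervalIntegral.integral_neg]
      have := hFTC T hT
      linarith
    have h4 : 0 ≤ E T := hE0 T hT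
    rw [le_div_iff₀ hθpos]
    nlinarith
  have hσ : Continuous (fun t:ℝ => max t t₀) := continuous_id.max continuous_const
  have hmax : ∀ t:ℝ, max t t₀ ∈ Ici t₀ := fun t => mem_Ici.2 (le_max_right _ _)
  have hfinal : ∀ (c : ℝ) (v : ℝ → ℝ), 0 ≤ c → ContinuousOn v (Ici t₀) →
      (∀ s ∈ Ici t₀, 0 ≤ v s) → (∀ s ∈ Ici t₀, θ * (c * v s) ≤ -Φ s) →
      ENNReal.ofReal c * ∫⁻ t in Ioi t₀, ENNReal.ofReal (v t) ≤ ENNReal.ofReal (E t₀ / θ) := by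
    intro c v hc hvc hv0 hvle
    have hveq : ∀ t ∈ Ioi t₀, ENNReal.ofReal (v t) = ENNReal.ofReal (v (max t t₀)) :=
      fun t ht => by rw [max_eq_left (le_of_lt ht)]
    rw [setLIntegral_congr_fun measurableSet_Ioi hveq]
    have hpull : ENNReal.ofReal c * ∫⁻ t in Ioi t₀, ENNReal.ofReal (v (max t t₀))
        = ∫⁻ t in Ioi t₀, ENNReal.ofReal (c * v (max t t₀)) := by
      rw [← lintegral_const_mul' _ _ ENNReal.ofReal_ne_top]
      congr 1
      funext t
      rw [ENNReal.ofReal_mul hc]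
    rw [hpull]
    apply lintegral_Ioi_le_of_intervalIntegral_le _ t₀ (E t₀/θ)
    · exact continuous_const.mul (hvc.comp_continuous hσ hmax)
    · intro s hs
      simp only [max_eq_left hs]
      exact mul_nonneg hc (hv0 s hs)
    · intro T hT
      have heq2 : ∫ s in t₀..T, c * v (max s t₀) = ∫ s in t₀..T, c * v s := by
        apply intervalIntegral.integral_congr
        intro s hs
        rw [uIcc_of_le hT] at hs
        simp only [max_eq_left hs.1]
      rw [heq2]
      exact hmain (fun s => c * v s) (continuousOn_const.mul hvc)
        (fun s hs => mul_nonneg hc (hv0 s hs)) hvle T hT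
  have hS1 : ∀ s ∈ Ici t₀, 0 ≤ (θ*s)*((1-2*θ)*(f (x s) - f xs + ⟪ls, A (x s) - b⟫)) := by
    intro s hs
    exact mul_nonneg (mul_nonneg hθpos.le (le_trans ht₀.le hs))
      (mul_nonneg (by linarith) (hDnn _))
  have hS2 : ∀ s ∈ Ici t₀, 0 ≤ (θ*s)*((1-θ)*β*‖A (x s) - b‖^2) := by
    intro s hs
    exact mul_nonneg (mul_nonneg hθpos.le (le_trans ht₀.le hs))
      (mul_nonneg (mul_nonneg (by linarith) hβ) (sq_nonneg _))
  have hS3 : ∀ s ∈ Ici t₀, 0 ≤ (θ*s)*(ξ*(‖x' s‖^2 + ‖l' s‖^2)) := by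
    intro s hs
    exact mul_nonneg (mul_nonneg hθpos.le (le_trans ht₀.le hs))
      (mul_nonneg hξ0 (by positivity))
  refine ⟨?_, ?_, ?_⟩
  · have happ := hfinal (β/2) (fun t => t * ‖A (x t) - b‖^2) (by linarith)
      (continuousOn_id.mul ((hArc.norm).pow 2))
      (fun s hs => mul_nonneg (le_trans ht₀.le hs) (sq_nonneg _))
      (by
        intro s hs
        show θ * (β/2 * (s * ‖A (x s) - b‖^2)) ≤ -Φ s
        have hs0 : (0:ℝ) ≤ s := le_trans ht₀.le hs
        have hkey : θ*(β/2 * (s*‖A (x s) - b‖^2)) ≤ (θ*s)*((1-θ)*β*‖A (x s) - b‖^2) := by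
          have hp := mul_nonneg (mul_nonneg (mul_nonneg (mul_nonneg hθpos.le hs0) hβ)
            (sq_nonneg ‖A (x s) - b‖)) (by linarith : (0:ℝ) ≤ 1/2-θ)
          nlinarith [hp]
        have hphi := hΦle s hs
        have hsum : (θ*s)*((1-θ)*β*‖A (x s) - b‖^2) ≤ -Φ s := by
          generalize hgen : Φ s = P at hphi ⊢
          nlinarith [hS1 s hs, hS3 s hs, hphi]
        linarith [hkey, hsum])
    have hI : ENNReal.ofReal β * (∫⁻ t in Ioi t₀, ENNReal.ofReal (t * ‖A (x t) - b‖^2))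
        = ENNReal.ofReal 2 * (ENNReal.ofReal (β/2) *
          (∫⁻ t in Ioi t₀, ENNReal.ofReal (t * ‖A (x t) - b‖^2))) := by
      rw [← mul_assoc, ← ENNReal.ofReal_mul (by norm_num : (0:ℝ) ≤ 2),
        show 2*(β/2) = β by ring]
    rw [hI]
    calc ENNReal.ofReal 2 * (ENNReal.ofReal (β/2) *
          (∫⁻ t in Ioi t₀, ENNReal.ofReal (t * ‖A (x t) - b‖^2)))
        ≤ ENNReal.ofReal 2 * ENNReal.ofReal (E t₀/θ) := mul_le_mul_right happ _
      _ = ENNReal.ofReal (2*(E t₀/θ)) := (ENNReal.ofReal_mul (by norm_num)).symm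
      _ = ENNReal.ofReal (2*E t₀/θ) := by rw [mul_div_assoc]
  · simp only [hopt2, sub_self, inner_zero_right, add_zero]
    apply hfinal (1-2*θ) (fun t => t * (f (x t) + ⟪ls, A (x t) - b⟫ - f xs)) (by linarith)
      (continuousOn_id.mul (((hfc.comp_continuousOn hxc).add
        (continuousOn_const.inner hArc)).sub continuousOn_const))
      (fun s hs => mul_nonneg (le_trans ht₀.le hs) (by linarith [hDnn (x s)]))
    intro s hs
    show θ * ((1-2*θ) * (s * (f (x s) + ⟪ls, A (x s) - b⟫ - f xs))) ≤ -Φ s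
    have := hΦle s hs
    have h1 : θ*((1-2*θ) * (s * (f (x s) + ⟪ls, A (x s) - b⟫ - f xs)))
        = (θ*s)*((1-2*θ)*(f (x s) - f xs + ⟪ls, A (x s) - b⟫)) := by ring
    nlinarith [hS2 s hs, hS3 s hs]
  · apply hfinal ξ (fun t => t * (‖x' t‖^2 + ‖l' t‖^2)) hξ0
      (continuousOn_id.mul ((hx'c.norm.pow 2).add (hl'c.norm.pow 2)))
      (fun s hs => mul_nonneg (le_trans ht₀.le hs) (by positivity))
    intro s hs
    show θ * (ξ * (s * (‖x' s‖^2 + ‖l' s‖^2))) ≤ -Φ s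
    have := hΦle s hs
    nlinarith [hS1 s hs, hS2 s hs]
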